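/- arXiv:2102.03192 — 5 statements merged into one kernel-verified Lean document; each statement's English description precedes it below -/
import Mathlib

section
/- Let X be a finite type with |X| = m ≥ 1, let K ≥ 1, and let x₁, …, x_K be a sequence of elements of X. For each k ∈ {1, …, K} let n_k = |{ j : 1 ≤ j ≤ k, x_j = x_k }| (the number of occurrences of x_k among the first k terms, so n_k ≥ 1). Then ∑_{k=1}^{K} 1/√(n_k) ≤ 2 √(m K). -/
lemma sum_inv_sqrt_le (N : ℕ) :
    ∑ t ∈ Finset.Icc 1 N, (1 : ℝ) / Real.sqrt t ≤ 2 * Real.sqrt N := by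
  induction N with
  | zero => simp
  | succ N ih =>
    rw [Finset.sum_Icc_succ_top (by omega)]
    have h1 : Real.sqrt N ^ 2 = N := Real.sq_sqrt (by positivity)
    have h2 : Real.sqrt (N + 1 : ℕ) ^ 2 = (N : ℝ) + 1 := by
      rw [Real.sq_sqrt (by positivity)]; push_cast; ring
    have h3 : (0 : ℝ) ≤ Real.sqrt N := Real.sqrt_nonneg _
    have h4 : (0 : ℝ) < Real.sqrt ((N : ℕ) + 1 : ℕ) := by
      apply Real.sqrt_pos.2; positivity
    have key : (1 : ℝ) / Real.sqrt ((N : ℕ) + 1 : ℕ) ≤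
        2 * Real.sqrt ((N : ℕ) + 1 : ℕ) - 2 * Real.sqrt N := by
      rw [div_le_iff₀ h4]
      nlinarith [sq_nonneg (Real.sqrt ((N : ℕ) + 1 : ℕ) - Real.sqrt N)]
    linarith

/-- Pigeonhole bound on the sum of inverse square roots of visitation counts:
for a sequence of `K` elements of a finite type of cardinality `m`, letting
`n k` be the number of occurrences of the `k`-th element among the first `k`
terms, we have `∑_{k=1}^{K} 1/√(n_k) ≤ 2√(m K)`. -/
theorem stmt_6 {X : Type*} [Fintype X] [DecidableEq X] (m K : ℕ)
    (hm : Fintype.card X = m) (hm1 : 1 ≤ m) (hK : 1 ≤ K)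
    (x : Fin K → X)
    (n : Fin K → ℕ)
    (hn : ∀ k : Fin K, n k = (Finset.univ.filter fun j : Fin K => j ≤ k ∧ x j = x k).card) :
    ∑ k : Fin K, (1 : ℝ) / Real.sqrt (n k) ≤ 2 * Real.sqrt (m * K) := by
  classical
  set S : X → Finset (Fin K) := fun i => Finset.univ.filter (fun k => x k = i) with hS
  have hmemS : ∀ k : Fin K, ∀ i, k ∈ S i ↔ x k = i := by intro k i; simp [hS]
  have hn1 : ∀ k, 1 ≤ n k := by
    intro k
    rw [hn k]
    exact Finset.card_pos.2 ⟨k, by simp⟩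
  have hnle : ∀ k, n k ≤ (S (x k)).card := by
    intro k
    rw [hn k]
    apply Finset.card_le_card
    intro j hj
    simp only [Finset.mem_filter, Finset.mem_univ, true_and] at hj ⊢
    simp [hS, hj.2]
  have hinj : ∀ i, ∀ k ∈ S i, ∀ k' ∈ S i, n k = n k' → k = k' := by
    intro i k hk k' hk' hnn
    by_contra hne
    rcases lt_or_gt_of_ne hne with h | h
    all_goals {
      have hxx : x k = x k' := by
        rw [(hmemS k i).1 hk, (hmemS k' i).1 hk']
      have hsub : (Finset.univ.filter fun j : Fin K => j ≤ k ∧ x j = x k) ⊂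
          (Finset.univ.filter fun j : Fin K => j ≤ k' ∧ x j = x k') ∨
          (Finset.univ.filter fun j : Fin K => j ≤ k' ∧ x j = x k') ⊂
          (Finset.univ.filter fun j : Fin K => j ≤ k ∧ x j = x k) := by
        first
        | (left
           constructor
           · intro j hj
             simp only [Finset.mem_filter, Finset.mem_univ, true_and] at hj ⊢
             exact ⟨hj.1.trans h.le, hxx ▸ hj.2⟩
           · intro hcon
             have := hcon (Finset.mem_filter.2 ⟨Finset.mem_univ _, le_refl k', rfl⟩)
             simp only [Finset.mem_filter] at this
             exact absurd this.2.1 (not_le.2 h))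
        | (right
           constructor
           · intro j hj
             simp only [Finset.mem_filter, Finset.mem_univ, true_and] at hj ⊢
             exact ⟨hj.1.trans h.le, hxx ▸ hj.2⟩
           · intro hcon
             have := hcon (Finset.mem_filter.2 ⟨Finset.mem_univ _, le_refl k, rfl⟩)
             simp only [Finset.mem_filter] at this
             exact absurd this.2.1 (not_le.2 h))
      rcases hsub with hsub | hsub
      · have := Finset.card_lt_card hsub
        rw [← hn k, ← hn k'] at this; omega
      · have := Finset.card_lt_card hsub
        rw [← hn k, ← hn k'] at this; omega
    }
  have hsplit : ∑ k : Fin K, (1 : ℝ) / Real.sqrt (n k)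
      = ∑ i : X, ∑ k ∈ S i, (1 : ℝ) / Real.sqrt (n k) := by
    rw [← Finset.sum_fiberwise Finset.univ x (fun k => (1 : ℝ) / Real.sqrt (n k))]
  have hinner : ∀ i : X, ∑ k ∈ S i, (1 : ℝ) / Real.sqrt (n k)
      ≤ 2 * Real.sqrt ((S i).card) := by
    intro i
    calc ∑ k ∈ S i, (1 : ℝ) / Real.sqrt (n k)
        = ∑ t ∈ (S i).image n, (1 : ℝ) / Real.sqrt t :=
          (Finset.sum_image (f := fun t : ℕ => (1:ℝ)/Real.sqrt t) (hinj i)).symm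
      _ ≤ ∑ t ∈ Finset.Icc 1 (S i).card, (1 : ℝ) / Real.sqrt t := by
          apply Finset.sum_le_sum_of_subset_of_nonneg
          · intro t ht
            rcases Finset.mem_image.1 ht with ⟨k, hk, rfl⟩
            have hxi : x k = i := (hmemS k i).1 hk
            rw [Finset.mem_Icc]
            exact ⟨hn1 k, hxi ▸ hnle k⟩
          · intro t _ _; positivity
      _ ≤ 2 * Real.sqrt ((S i).card) := sum_inv_sqrt_le _
  rw [hsplit]
  have hcards : ∑ i : X, ((S i).card : ℝ) = K := by
    have := Finset.card_eq_sum_card_fiberwise (f := x) (s := Finset.univ)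
      (t := (Finset.univ : Finset X)) (fun k _ => Finset.mem_univ _)
    simp only [Finset.card_univ, Fintype.card_fin] at this
    rw [show ∑ i : X, ((S i).card : ℝ) = ((∑ i : X, (S i).card : ℕ) : ℝ) by push_cast; rfl]
    rw [← this]
  calc ∑ i : X, ∑ k ∈ S i, (1 : ℝ) / Real.sqrt (n k)
      ≤ ∑ i : X, 2 * Real.sqrt ((S i).card) := Finset.sum_le_sum (fun i _ => hinner i)
    _ = 2 * ∑ i : X, Real.sqrt ((S i).card) := by rw [Finset.mul_sum]
    _ ≤ 2 * Real.sqrt (m * K) := by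
        have hsq : (∑ i : X, Real.sqrt ((S i).card)) ^ 2 ≤ (m : ℝ) * K := by
          calc (∑ i : X, Real.sqrt ((S i).card)) ^ 2
              ≤ (Finset.univ : Finset X).card * ∑ i : X, Real.sqrt ((S i).card) ^ 2 :=
                sq_sum_le_card_mul_sum_sq
            _ = (m : ℝ) * K := by
                rw [Finset.card_univ, hm]
                congr 1
                rw [← hcards]
                apply Finset.sum_congr rfl
                intro i _
                exact Real.sq_sqrt (by positivity)
        have h0 : 0 ≤ ∑ i : X, Real.sqrt ((S i).card) :=
          Finset.sum_nonneg fun i _ => Real.sqrt_nonneg _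
        have := Real.sqrt_le_sqrt hsq
        rw [Real.sqrt_sq h0] at this
        have hcast : Real.sqrt ((m : ℝ) * K) = Real.sqrt ((m * K : ℕ)) := by push_cast; rfl
        rw [hcast] at this
        linarith
end

section
/- Let d, K ≥ 1, G > 0, and let B̄ denote the closed unit ball of the Euclidean space ℝ^d. Let f₁, …, f_K : ℝ^d → ℝ be convex functions, and let θ¹ ∈ B̄. Suppose for each k ∈ {1, …, K} there is a vector g^k ∈ ℝ^d with ‖g^k‖₂ ≤ G satisfying the subgradient inequality f_k(θ) ≥ f_k(θ^k) + ⟪g^k, θ − θ^k⟫ for all θ ∈ ℝ^d, and define θ^{k+1} = Π_{B̄}( θ^k − g^k/(G √k) ), where Π_{B̄} is the metric projection onto B̄. Then for every θ ∈ B̄: ∑_{k=1}^{K} ( f_k(θ^k) − f_k(θ) ) ≤ 3 G √K. -/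
/-- The metric projection onto the closed unit ball of Euclidean space:
it is the identity inside the ball and radial normalization outside. -/
noncomputable def projBall {d : ℕ} (y : EuclideanSpace ℝ (Fin d)) :
    EuclideanSpace ℝ (Fin d) :=
  if ‖y‖ ≤ 1 then y else ‖y‖⁻¹ • y

lemma projBall_norm_le {d : ℕ} (y : EuclideanSpace ℝ (Fin d)) : ‖projBall y‖ ≤ 1 := by
  unfold projBall
  split_ifs with h
  · exact h
  · push_neg at h
    rw [norm_smul, norm_inv, norm_norm, inv_mul_cancel₀ (by positivity)]

lemma projBall_dist_le {d : ℕ} (y ϑ : EuclideanSpace ℝ (Fin d)) (hϑ : ‖ϑ‖ ≤ 1) :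
    ‖projBall y - ϑ‖ ≤ ‖y - ϑ‖ := by
  unfold projBall
  split_ifs with h
  · exact le_refl _
  · push_neg at h
    have hr : (0:ℝ) < ‖y‖ := lt_trans one_pos h
    have hsq : ‖(‖y‖⁻¹ • y) - ϑ‖ ^ 2 ≤ ‖y - ϑ‖ ^ 2 := by
      rw [norm_sub_sq_real, norm_sub_sq_real]
      rw [real_inner_smul_left, norm_smul, norm_inv, norm_norm,
        inv_mul_cancel₀ (ne_of_gt hr)]
      have hcs : (inner ℝ y ϑ : ℝ) ≤ ‖y‖ := by
        calc (inner ℝ y ϑ : ℝ) ≤ ‖y‖ * ‖ϑ‖ := real_inner_le_norm y ϑ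
        _ ≤ ‖y‖ * 1 := by nlinarith
        _ = ‖y‖ := mul_one _
      have h1 : ‖y‖⁻¹ * ‖y‖ = 1 := inv_mul_cancel₀ (ne_of_gt hr)
      nlinarith [sq_nonneg (‖y‖ - 1), mul_pos hr hr]
    have h1 : (0:ℝ) ≤ ‖y - ϑ‖ := norm_nonneg _
    nlinarith [norm_nonneg ((‖y‖⁻¹ • y) - ϑ)]

lemma sum_inv_sqrt_le_s10 (n : ℕ) :
    ∑ k ∈ Finset.Icc 1 n, (Real.sqrt k)⁻¹ ≤ 2 * Real.sqrt n := by
  induction n with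
  | zero => simp
  | succ n ih =>
    rw [Finset.sum_Icc_succ_top (by omega)]
    have h1 : Real.sqrt n ^ 2 = n := Real.sq_sqrt (Nat.cast_nonneg n)
    have h2 : Real.sqrt (n+1:ℕ) ^ 2 = ((n+1:ℕ):ℝ) := Real.sq_sqrt (Nat.cast_nonneg _)
    have h3 : (0:ℝ) < Real.sqrt (n+1:ℕ) := Real.sqrt_pos.mpr (by positivity)
    have h4 : (0:ℝ) ≤ Real.sqrt n := Real.sqrt_nonneg _
    have key : (Real.sqrt (n+1:ℕ))⁻¹ ≤ 2 * Real.sqrt (n+1:ℕ) - 2 * Real.sqrt n := by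
      rw [inv_le_iff_one_le_mul₀' h3]
      have h5 : ((n+1:ℕ):ℝ) = (n:ℝ) + 1 := by push_cast; ring
      nlinarith [sq_nonneg (Real.sqrt (n+1:ℕ) - Real.sqrt n)]
    linarith

lemma tele_sum (a b : ℕ → ℝ) (hb0 : b 0 = 0) (hb : Monotone b) :
    ∀ n : ℕ, (∀ k, 1 ≤ k → k ≤ n+1 → 0 ≤ a k ∧ a k ≤ 4) →
    ∑ k ∈ Finset.Icc 1 n, b k / 2 * (a k - a (k+1)) ≤ 2 * b n - b n / 2 * a (n+1) := by
  intro n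
  induction n with
  | zero => intro _; simp [hb0]
  | succ n ih =>
    intro ha
    rw [Finset.sum_Icc_succ_top (by omega)]
    have ih' := ih (fun k hk1 hk2 => ha k hk1 (by omega))
    have h1 := ha (n+1) (by omega) (by omega)
    have h2 := ha (n+2) (by omega) (by omega)
    have hbm : b n ≤ b (n+1) := hb (by omega)
    nlinarith

/-- Regret bound for online projected subgradient descent on the closed unit
ball with step sizes `η_k = 1/(G√k)`: for convex losses `f_k` with subgradients
`g^k` of norm at most `G`, the regret against any comparator `θ` in the ball is
at most `3 G √K`. -/
theorem stmt_10 (d K : ℕ) (hd : 1 ≤ d) (hK : 1 ≤ K) (G : ℝ) (hG : 0 < G)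
    (f : ℕ → EuclideanSpace ℝ (Fin d) → ℝ)
    (hf : ∀ k ∈ Finset.Icc 1 K, ConvexOn ℝ Set.univ (f k))
    (θ : ℕ → EuclideanSpace ℝ (Fin d)) (hθ1 : ‖θ 1‖ ≤ 1)
    (g : ℕ → EuclideanSpace ℝ (Fin d))
    (hg : ∀ k ∈ Finset.Icc 1 K, ‖g k‖ ≤ G)
    (hsub : ∀ k ∈ Finset.Icc 1 K, ∀ ϑ : EuclideanSpace ℝ (Fin d),
      f k ϑ ≥ f k (θ k) + (inner ℝ (g k) (ϑ - θ k) : ℝ))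
    (hupd : ∀ k ∈ Finset.Icc 1 K,
      θ (k + 1) = projBall (θ k - (G * Real.sqrt k)⁻¹ • g k)) :
    ∀ ϑ : EuclideanSpace ℝ (Fin d), ‖ϑ‖ ≤ 1 →
      ∑ k ∈ Finset.Icc 1 K, (f k (θ k) - f k ϑ) ≤ 3 * G * Real.sqrt K := by
  intro ϑ hϑ
  -- all iterates are in the ball
  have hball : ∀ k, 1 ≤ k → k ≤ K + 1 → ‖θ k‖ ≤ 1 := by
    intro k
    induction k with
    | zero => omega
    | succ k ih =>
      intro _ hk
      rcases Nat.eq_or_lt_of_le (show 1 ≤ k + 1 from by omega) with h | h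
      · rw [← h]; exact hθ1
      · rw [hupd k (Finset.mem_Icc.mpr ⟨by omega, by omega⟩)]
        exact projBall_norm_le _
  set a : ℕ → ℝ := fun k => ‖θ k - ϑ‖ ^ 2 with ha_def
  set b : ℕ → ℝ := fun k => G * Real.sqrt k with hb_def
  have hb0 : b 0 = 0 := by simp [hb_def]
  have hbmono : Monotone b := by
    intro i j hij
    exact mul_le_mul_of_nonneg_left
      (Real.sqrt_le_sqrt (by exact_mod_cast hij)) hG.le
  have habd : ∀ k, 1 ≤ k → k ≤ K + 1 → 0 ≤ a k ∧ a k ≤ 4 := by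
    intro k hk1 hk2
    constructor
    · positivity
    · have h1 : ‖θ k - ϑ‖ ≤ 2 := by
        calc ‖θ k - ϑ‖ ≤ ‖θ k‖ + ‖ϑ‖ := norm_sub_le _ _
        _ ≤ 2 := by linarith [hball k hk1 hk2]
      have h2 : (0:ℝ) ≤ ‖θ k - ϑ‖ := norm_nonneg _
      show ‖θ k - ϑ‖ ^ 2 ≤ 4
      nlinarith
  have key : ∀ k ∈ Finset.Icc 1 K, f k (θ k) - f k ϑ ≤
      b k / 2 * (a k - a (k+1)) + G / 2 * (Real.sqrt k)⁻¹ := by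
    intro k hk
    rw [Finset.mem_Icc] at hk
    have hsk : (0:ℝ) < Real.sqrt k := Real.sqrt_pos.mpr (by exact_mod_cast hk.1)
    have hη : (0:ℝ) < G * Real.sqrt k := mul_pos hG hsk
    -- subgradient inequality gives regret ≤ inner product
    have hs := hsub k (Finset.mem_Icc.mpr hk) ϑ
    have hreg : f k (θ k) - f k ϑ ≤ (inner ℝ (g k) (θ k - ϑ) : ℝ) := by
      have heq : (inner ℝ (g k) (ϑ - θ k) : ℝ) = -(inner ℝ (g k) (θ k - ϑ) : ℝ) := by
        rw [← inner_neg_right]; congr 1; abel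
      rw [heq] at hs
      linarith
    -- descent inequality
    have hproj : ‖θ (k+1) - ϑ‖ ≤ ‖θ k - (G * Real.sqrt k)⁻¹ • g k - ϑ‖ := by
      rw [hupd k (Finset.mem_Icc.mpr hk)]
      exact projBall_dist_le _ _ hϑ
    have hsq : a (k+1) ≤ ‖θ k - (G * Real.sqrt k)⁻¹ • g k - ϑ‖ ^ 2 := by
      simp only [ha_def]
      exact pow_le_pow_left₀ (norm_nonneg _) hproj 2
    have hexp : ‖θ k - (G * Real.sqrt k)⁻¹ • g k - ϑ‖ ^ 2 =
        a k - 2 * ((G * Real.sqrt k)⁻¹ * (inner ℝ (g k) (θ k - ϑ) : ℝ))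
          + (G * Real.sqrt k)⁻¹ ^ 2 * ‖g k‖ ^ 2 := by
      have hre : θ k - (G * Real.sqrt k)⁻¹ • g k - ϑ
          = (θ k - ϑ) - (G * Real.sqrt k)⁻¹ • g k := by abel
      rw [hre, norm_sub_sq_real, real_inner_smul_right, norm_smul]
      have hcomm : (inner ℝ (θ k - ϑ) (g k) : ℝ) = (inner ℝ (g k) (θ k - ϑ) : ℝ) :=
        real_inner_comm _ _
      rw [hcomm]
      simp only [ha_def]
      rw [Real.norm_eq_abs, abs_of_pos (inv_pos.mpr hη)]
      ring
    have hgk := hg k (Finset.mem_Icc.mpr hk)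
    have hgk0 : (0:ℝ) ≤ ‖g k‖ := norm_nonneg _
    -- combine
    have hinner : (inner ℝ (g k) (θ k - ϑ) : ℝ) ≤
        b k / 2 * (a k - a (k+1)) + G / 2 * (Real.sqrt k)⁻¹ := by
      have h1 : a (k+1) ≤ a k - 2 * ((G * Real.sqrt k)⁻¹ * (inner ℝ (g k) (θ k - ϑ) : ℝ))
          + (G * Real.sqrt k)⁻¹ ^ 2 * ‖g k‖ ^ 2 := hexp ▸ hsq
      have h2 : (G * Real.sqrt k)⁻¹ ^ 2 * ‖g k‖ ^ 2 ≤ (G * Real.sqrt k)⁻¹ ^ 2 * G ^ 2 :=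
        mul_le_mul_of_nonneg_left (by nlinarith) (by positivity)
      have h3 : (G * Real.sqrt k)⁻¹ ^ 2 * G ^ 2 = (Real.sqrt k)⁻¹ ^ 2 := by
        have hsk2 : Real.sqrt k ^ 2 = (k:ℝ) := Real.sq_sqrt (Nat.cast_nonneg k)
        have hk0 : (0:ℝ) < (k:ℝ) := by exact_mod_cast Nat.lt_of_lt_of_le Nat.zero_lt_one hk.1
        field_simp [hG.ne', hsk.ne']
      have h5 : (G * Real.sqrt k) * (G * Real.sqrt k)⁻¹ = 1 := mul_inv_cancel₀ (ne_of_gt hη)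
      have h6 : Real.sqrt k * (Real.sqrt k)⁻¹ = 1 := mul_inv_cancel₀ (ne_of_gt hsk)
      have h1' : a (k+1) ≤ a k
          - 2 * ((G * Real.sqrt k)⁻¹ * (inner ℝ (g k) (θ k - ϑ) : ℝ)) + (Real.sqrt k)⁻¹ ^ 2 := by
        linarith
      have hmul := mul_le_mul_of_nonneg_left h1'
        (le_of_lt (show (0:ℝ) < G * Real.sqrt k / 2 by positivity))
      have hfin : G * Real.sqrt k / 2 * (a k
          - 2 * ((G * Real.sqrt k)⁻¹ * (inner ℝ (g k) (θ k - ϑ) : ℝ)) + (Real.sqrt k)⁻¹ ^ 2)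
          = G * Real.sqrt k / 2 * a k - (inner ℝ (g k) (θ k - ϑ) : ℝ)
            + G / 2 * (Real.sqrt k)⁻¹ := by
        linear_combination (-(inner ℝ (g k) (θ k - ϑ) : ℝ)) * h5
          + G / 2 * (Real.sqrt k)⁻¹ * h6
      show (inner ℝ (g k) (θ k - ϑ) : ℝ) ≤
        G * Real.sqrt k / 2 * (a k - a (k+1)) + G / 2 * (Real.sqrt k)⁻¹
      nlinarith [hmul, hfin]
    linarith
  calc ∑ k ∈ Finset.Icc 1 K, (f k (θ k) - f k ϑ)
      ≤ ∑ k ∈ Finset.Icc 1 K, (b k / 2 * (a k - a (k+1)) + G / 2 * (Real.sqrt k)⁻¹) :=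
        Finset.sum_le_sum key
    _ = ∑ k ∈ Finset.Icc 1 K, b k / 2 * (a k - a (k+1))
        + G / 2 * ∑ k ∈ Finset.Icc 1 K, (Real.sqrt k)⁻¹ := by
        rw [Finset.sum_add_distrib, Finset.mul_sum]
    _ ≤ (2 * b K - b K / 2 * a (K+1)) + G / 2 * (2 * Real.sqrt K) := by
        have h1 := tele_sum a b hb0 hbmono K habd
        have h2 := sum_inv_sqrt_le_s10 K
        have h3 : (0:ℝ) ≤ G / 2 := by positivity
        nlinarith [mul_le_mul_of_nonneg_left h2 h3]
    _ ≤ 3 * G * Real.sqrt K := by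
        have hbK : 0 ≤ b K := by
          have : b K = G * Real.sqrt K := rfl
          rw [this]; positivity
        have haK := habd (K+1) (by omega) (by omega)
        have hbe : b K = G * Real.sqrt K := rfl
        nlinarith [mul_nonneg hbK haK.1]
end

section
/- Let S, A, B be finite nonempty types, let H ≥ 1, R ≥ 0, and let r_h : S × A × B → ℝ satisfy |r_h(s,a,b)| ≤ R for h ∈ {1, …, H}. Let P_h(·|s,a,b) and P̂_h(·|s,a,b) be probability vectors on S for each h, s, a, b, and let β_h : S × A × B → ℝ with β_h ≥ 0. Define the true values by V*_{H+1}(s) = 0, Q*_h(s,a,b) = r_h(s,a,b) + ∑_{s'} P_h(s'|s,a,b) V*_{h+1}(s'), V*_h(s) = min_{μ ∈ Δ(A)} max_{ν ∈ Δ(B)} ∑_{a,b} μ(a) ν(b) Q*_h(s,a,b); and define the pessimistic estimates by V_{H+1}(s) = 0, Q_h(s,a,b) = max{ r_h(s,a,b) + ∑_{s'} P̂_h(s'|s,a,b) V_{h+1}(s') − β_h(s,a,b), −RH }, V_h(s) = min_{μ ∈ Δ(A)} max_{ν ∈ Δ(B)} ∑_{a,b} μ(a) ν(b) Q_h(s,a,b).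 If for all h, s, a, b: | ∑_{s'} ( P̂_h(s'|s,a,b) − P_h(s'|s,a,b) ) V*_{h+1}(s') | ≤ β_h(s,a,b), then for all h, s, a, b: Q_h(s,a,b) ≤ Q*_h(s,a,b) and V_h(s) ≤ V*_h(s). -/
set_option linter.unusedSectionVars false

open Finset

section aux

variable {A B : Type*} [Fintype A] [Fintype B] [Nonempty A] [Nonempty B]

lemma my_simplex_nonempty {A : Type*} [Fintype A] [Nonempty A] :
    (stdSimplex ℝ A).Nonempty := by
  classical
  obtain ⟨a0⟩ := ‹Nonempty A›
  refine ⟨fun a => if a = a0 then 1 else 0, fun a => ?_, by simp⟩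
  dsimp only; split <;> norm_num

lemma simplex_sum_const {μ : A → ℝ} {ν : B → ℝ}
    (hμ : μ ∈ stdSimplex ℝ A) (hν : ν ∈ stdSimplex ℝ B) (c : ℝ) :
    ∑ a, ∑ b, μ a * ν b * c = c := by
  have : ∀ a, ∑ b, μ a * ν b * c = μ a * c := by
    intro a
    rw [← Finset.sum_mul, ← Finset.mul_sum, hν.2, mul_one]
  simp only [this, ← Finset.sum_mul, hμ.2, one_mul]

lemma simplex_sum_le {μ : A → ℝ} {ν : B → ℝ}
    (hμ : μ ∈ stdSimplex ℝ A) (hν : ν ∈ stdSimplex ℝ B)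
    {f : A → B → ℝ} {c : ℝ} (hf : ∀ a b, f a b ≤ c) :
    ∑ a, ∑ b, μ a * ν b * f a b ≤ c := by
  rw [← simplex_sum_const hμ hν c]
  refine Finset.sum_le_sum fun a _ => Finset.sum_le_sum fun b _ => ?_
  exact mul_le_mul_of_nonneg_left (hf a b) (mul_nonneg (hμ.1 a) (hν.1 b))

lemma simplex_sum_ge {μ : A → ℝ} {ν : B → ℝ}
    (hμ : μ ∈ stdSimplex ℝ A) (hν : ν ∈ stdSimplex ℝ B)
    {f : A → B → ℝ} {c : ℝ} (hf : ∀ a b, c ≤ f a b) :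
    c ≤ ∑ a, ∑ b, μ a * ν b * f a b := by
  rw [← simplex_sum_const hμ hν c]
  refine Finset.sum_le_sum fun a _ => Finset.sum_le_sum fun b _ => ?_
  exact mul_le_mul_of_nonneg_left (hf a b) (mul_nonneg (hμ.1 a) (hν.1 b))

noncomputable def mmVal (f : A → B → ℝ) : ℝ :=
  sInf ((fun μ : A → ℝ =>
    sSup ((fun ν : B → ℝ => ∑ a : A, ∑ b : B, μ a * ν b * f a b) ''
      stdSimplex ℝ B)) '' stdSimplex ℝ A)

lemma f_le_bound (f : A → B → ℝ) (a : A) (b : B) :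
    f a b ≤ ∑ a', ∑ b', |f a' b'| := by
  calc f a b ≤ |f a b| := le_abs_self _
  _ ≤ ∑ b', |f a b'| := Finset.single_le_sum (f := fun b' => |f a b'|) (fun _ _ => abs_nonneg _) (mem_univ b)
  _ ≤ ∑ a', ∑ b', |f a' b'| :=
      Finset.single_le_sum (f := fun a' => ∑ b', |f a' b'|)
        (fun _ _ => Finset.sum_nonneg fun _ _ => abs_nonneg _) (mem_univ a)

lemma f_ge_bound (f : A → B → ℝ) (a : A) (b : B) :
    -(∑ a', ∑ b', |f a' b'|) ≤ f a b := by
  have := f_le_bound (fun a b => -f a b) a b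
  simp only [abs_neg] at this
  linarith

lemma inner_bdd (f : A → B → ℝ) {μ : A → ℝ} (hμ : μ ∈ stdSimplex ℝ A) :
    BddAbove ((fun ν : B → ℝ => ∑ a : A, ∑ b : B, μ a * ν b * f a b) ''
      stdSimplex ℝ B) := by
  refine ⟨∑ a', ∑ b', |f a' b'|, ?_⟩
  rintro y ⟨ν, hν, rfl⟩
  exact simplex_sum_le hμ hν (f_le_bound f)

lemma sSup_inner_ge (f : A → B → ℝ) {μ : A → ℝ} (hμ : μ ∈ stdSimplex ℝ A)
    {c : ℝ} (hf : ∀ a b, c ≤ f a b) :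
    c ≤ sSup ((fun ν : B → ℝ => ∑ a : A, ∑ b : B, μ a * ν b * f a b) ''
      stdSimplex ℝ B) := by
  obtain ⟨ν0, hν0⟩ := my_simplex_nonempty (A := B)
  exact (simplex_sum_ge hμ hν0 hf).trans
    (le_csSup (inner_bdd f hμ) ⟨ν0, hν0, rfl⟩)

lemma outer_bddBelow (f : A → B → ℝ) :
    BddBelow ((fun μ : A → ℝ =>
      sSup ((fun ν : B → ℝ => ∑ a : A, ∑ b : B, μ a * ν b * f a b) ''
        stdSimplex ℝ B)) '' stdSimplex ℝ A) := by
  refine ⟨-(∑ a', ∑ b', |f a' b'|), ?_⟩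
  rintro y ⟨μ, hμ, rfl⟩
  exact sSup_inner_ge f hμ (f_ge_bound f)

lemma le_mmVal {f : A → B → ℝ} {c : ℝ} (hf : ∀ a b, c ≤ f a b) :
    c ≤ mmVal f := by
  refine le_csInf (my_simplex_nonempty.image _) ?_
  rintro x ⟨μ, hμ, rfl⟩
  exact sSup_inner_ge f hμ hf

lemma mmVal_mono {f g : A → B → ℝ} (hfg : ∀ a b, f a b ≤ g a b) :
    mmVal f ≤ mmVal g := by
  refine le_csInf (my_simplex_nonempty.image _) ?_
  rintro x ⟨μ, hμ, rfl⟩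
  have h1 : mmVal f ≤ sSup ((fun ν : B → ℝ => ∑ a : A, ∑ b : B, μ a * ν b * f a b) ''
      stdSimplex ℝ B) := csInf_le (outer_bddBelow f) ⟨μ, hμ, rfl⟩
  refine h1.trans (csSup_le (my_simplex_nonempty.image _) ?_)
  rintro y ⟨ν, hν, rfl⟩
  have h2 : ∑ a : A, ∑ b : B, μ a * ν b * f a b ≤ ∑ a : A, ∑ b : B, μ a * ν b * g a b := by
    refine Finset.sum_le_sum fun a _ => Finset.sum_le_sum fun b _ => ?_
    exact mul_le_mul_of_nonneg_left (hfg a b) (mul_nonneg (hμ.1 a) (hν.1 b))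
  exact h2.trans (le_csSup (inner_bdd g hμ) ⟨ν, hν, rfl⟩)

end aux

/-- Deterministic backward-induction core of the optimism (lower confidence
bound) lemma for value iteration with exploration bonuses in a finite-horizon
two-player zero-sum Markov game (first player minimizing): if the bonus `β`
dominates the transition estimation error on the true value `V*`, then the
pessimistic estimates `Q, V` are lower bounds of `Q*, V*`. -/
theorem stmt_13 {S A B : Type*} [Fintype S] [Fintype A] [Fintype B]
    [Nonempty S] [Nonempty A] [Nonempty B]
    (H : ℕ) (hH : 1 ≤ H) (R : ℝ) (hR : 0 ≤ R)
    (r : ℕ → S → A → B → ℝ)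
    (hr : ∀ h ∈ Finset.Icc 1 H, ∀ s a b, |r h s a b| ≤ R)
    (P Phat : ℕ → S → A → B → S → ℝ)
    (hP0 : ∀ h ∈ Finset.Icc 1 H, ∀ s a b s', 0 ≤ P h s a b s')
    (hP1 : ∀ h ∈ Finset.Icc 1 H, ∀ s a b, ∑ s' : S, P h s a b s' = 1)
    (hPhat0 : ∀ h ∈ Finset.Icc 1 H, ∀ s a b s', 0 ≤ Phat h s a b s')
    (hPhat1 : ∀ h ∈ Finset.Icc 1 H, ∀ s a b, ∑ s' : S, Phat h s a b s' = 1)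
    (β : ℕ → S → A → B → ℝ) (hβ : ∀ h s a b, 0 ≤ β h s a b)
    (Qstar : ℕ → S → A → B → ℝ) (Vstar : ℕ → S → ℝ)
    (hVstarEnd : ∀ s, Vstar (H + 1) s = 0)
    (hQstar : ∀ h ∈ Finset.Icc 1 H, ∀ s a b,
      Qstar h s a b = r h s a b + ∑ s' : S, P h s a b s' * Vstar (h + 1) s')
    (hVstar : ∀ h ∈ Finset.Icc 1 H, ∀ s,
      Vstar h s = sInf ((fun μ : A → ℝ =>
          sSup ((fun ν : B → ℝ => ∑ a : A, ∑ b : B, μ a * ν b * Qstar h s a b) ''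
            stdSimplex ℝ B)) '' stdSimplex ℝ A))
    (Q : ℕ → S → A → B → ℝ) (V : ℕ → S → ℝ)
    (hVEnd : ∀ s, V (H + 1) s = 0)
    (hQ : ∀ h ∈ Finset.Icc 1 H, ∀ s a b,
      Q h s a b = max (r h s a b + (∑ s' : S, Phat h s a b s' * V (h + 1) s')
        - β h s a b) (-(R * H)))
    (hV : ∀ h ∈ Finset.Icc 1 H, ∀ s,
      V h s = sInf ((fun μ : A → ℝ =>
          sSup ((fun ν : B → ℝ => ∑ a : A, ∑ b : B, μ a * ν b * Q h s a b) ''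
            stdSimplex ℝ B)) '' stdSimplex ℝ A))
    (hconc : ∀ h ∈ Finset.Icc 1 H, ∀ s a b,
      |∑ s' : S, (Phat h s a b s' - P h s a b s') * Vstar (h + 1) s'| ≤ β h s a b) :
    ∀ h ∈ Finset.Icc 1 H, ∀ s a b,
      Q h s a b ≤ Qstar h s a b ∧ V h s ≤ Vstar h s := by
  classical
  have key : ∀ n h, h + n = H + 1 → 1 ≤ h →
      (∀ s, -(R * ((H : ℝ) + 1 - h)) ≤ Vstar h s) ∧
      (∀ s, V h s ≤ Vstar h s) ∧
      (h ≤ H → ∀ s a b, Q h s a b ≤ Qstar h s a b) := by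
    intro n
    induction n with
    | zero =>
      intro h hh _
      have : h = H + 1 := by omega
      subst this
      refine ⟨fun s => ?_, fun s => by rw [hVstarEnd, hVEnd], fun hle => by omega⟩
      rw [hVstarEnd]
      push_cast
      ring_nf
      simp only [le_refl]
    | succ n ih =>
      intro h hh h1
      have hhH : h ≤ H := by omega
      have hmem : h ∈ Finset.Icc 1 H := Finset.mem_Icc.mpr ⟨h1, hhH⟩
      obtain ⟨ihV, ihVV, _⟩ := ih (h + 1) (by omega) (by omega)
      have ihV' : ∀ s', -(R * ((H : ℝ) - h)) ≤ Vstar (h + 1) s' := by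
        intro s'
        have := ihV s'
        push_cast at this
        convert this using 3
        ring
      have hQl : ∀ s a b, -(R * ((H : ℝ) + 1 - h)) ≤ Qstar h s a b := by
        intro s a b
        rw [hQstar h hmem s a b]
        have hsum : -(R * ((H : ℝ) - h)) ≤ ∑ s' : S, P h s a b s' * Vstar (h + 1) s' := by
          calc -(R * ((H : ℝ) - h))
              = ∑ s' : S, P h s a b s' * (-(R * ((H : ℝ) - h))) := by
                rw [← Finset.sum_mul, hP1 h hmem, one_mul]
          _ ≤ _ := Finset.sum_le_sum fun s' _ =>
                mul_le_mul_of_nonneg_left (ihV' s') (hP0 h hmem s a b s')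
        have hrl : -R ≤ r h s a b := neg_le_of_abs_le (hr h hmem s a b)
        have : R * ((H : ℝ) + 1 - h) = R + R * ((H : ℝ) - h) := by ring
        linarith
      have hVl : ∀ s, -(R * ((H : ℝ) + 1 - h)) ≤ Vstar h s := by
        intro s
        rw [hVstar h hmem s]
        exact le_mmVal fun a b => hQl s a b
      have hQQ : ∀ s a b, Q h s a b ≤ Qstar h s a b := by
        intro s a b
        rw [hQ h hmem s a b]
        apply max_le
        · rw [hQstar h hmem s a b]
          have e1 : ∑ s' : S, Phat h s a b s' * V (h + 1) s'
              ≤ ∑ s' : S, Phat h s a b s' * Vstar (h + 1) s' :=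
            Finset.sum_le_sum fun s' _ =>
              mul_le_mul_of_nonneg_left (ihVV s') (hPhat0 h hmem s a b s')
          have e2 := (abs_le.mp (hconc h hmem s a b)).2
          simp only [sub_mul, Finset.sum_sub_distrib] at e2
          linarith
        · have := hQl s a b
          have h2 : R * ((H : ℝ) + 1 - h) ≤ R * H := by
            have h3 : (1 : ℝ) ≤ (h : ℝ) := by exact_mod_cast h1
            nlinarith
          linarith
      have hVV : ∀ s, V h s ≤ Vstar h s := by
        intro s
        rw [hV h hmem s, hVstar h hmem s]
        exact mmVal_mono fun a b => hQQ s a b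
      exact ⟨hVl, hVV, fun _ => hQQ⟩
  intro h hmem s a b
  rw [Finset.mem_Icc] at hmem
  obtain ⟨_, hVV, hQQ⟩ := key (H + 1 - h) h (by omega) hmem.1
  exact ⟨hQQ hmem.2 s a b, hVV s⟩
end

section
/- Let a ∈ ℝ^d with ‖a‖₂ = 1, let b ∈ ℝ, let W be a nonempty subset of the halfspace { y ∈ ℝ^d : ⟪a, y⟫ ≤ b }, let p ∈ ℝ^d satisfy ⟪a, p⟫ = b, and let γ ∈ (0, 1]. Suppose x ∈ ℝ^d satisfies ⟪a, x − p⟫ ≥ γ ‖x − p‖₂. Then dist(x, W) ≥ γ ‖x − p‖₂. Consequently, for every 1-Lipschitz function g : ℝ^d → ℝ and every w* ∈ ℝ^d with g(w*) ≤ g(p), one has g(x) − g(w*) ≥ − dist(x, W)/γ. -/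
/-- Key geometric step (nonsingular-intersection case) for lower-bounding cost
suboptimality by constraint violation: if `W` lies in the halfspace
`⟪a, ·⟫ ≤ b`, the point `p` lies on its boundary, and `x` makes an angle at
most `arccos γ` with the outward normal `a` as seen from `p`, then
`dist(x, W) ≥ γ ‖x − p‖`, and hence for any 1-Lipschitz `g` and any `w*` with
`g(w*) ≤ g(p)`, `g(x) − g(w*) ≥ −dist(x, W)/γ`. -/
theorem stmt_14 {d : ℕ} (a : EuclideanSpace ℝ (Fin d)) (ha : ‖a‖ = 1) (b : ℝ)
    (W : Set (EuclideanSpace ℝ (Fin d))) (hne : W.Nonempty)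
    (hW : W ⊆ {y | (inner ℝ a y : ℝ) ≤ b})
    (p : EuclideanSpace ℝ (Fin d)) (hp : (inner ℝ a p : ℝ) = b)
    (γ : ℝ) (hγ : γ ∈ Set.Ioc (0 : ℝ) 1)
    (x : EuclideanSpace ℝ (Fin d)) (hx : (inner ℝ a (x - p) : ℝ) ≥ γ * ‖x - p‖) :
    Metric.infDist x W ≥ γ * ‖x - p‖ ∧
    ∀ g : EuclideanSpace ℝ (Fin d) → ℝ, LipschitzWith 1 g →
      ∀ wstar : EuclideanSpace ℝ (Fin d), g wstar ≤ g p →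
        g x - g wstar ≥ -(Metric.infDist x W / γ) := by
  have hγ0 := hγ.1
  have key : Metric.infDist x W ≥ γ * ‖x - p‖ := by
    have : Nonempty ↥W := hne.to_subtype
    rw [ge_iff_le, Metric.infDist_eq_iInf]
    apply le_ciInf
    rintro ⟨w, hw⟩
    have h1 : (inner ℝ a (x - w) : ℝ) ≤ ‖x - w‖ := by
      calc (inner ℝ a (x - w) : ℝ) ≤ ‖a‖ * ‖x - w‖ := real_inner_le_norm a (x - w)
        _ = ‖x - w‖ := by rw [ha, one_mul]
    have h2 : (inner ℝ a (x - w) : ℝ) ≥ γ * ‖x - p‖ := by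
      have hwb : (inner ℝ a w : ℝ) ≤ b := hW hw
      have : (inner ℝ a (x - w) : ℝ) = inner ℝ a (x - p) + (b - inner ℝ a w) := by
        rw [inner_sub_right, inner_sub_right, hp]; ring
      rw [this]
      have : (0:ℝ) ≤ b - inner ℝ a w := by linarith
      linarith
    calc γ * ‖x - p‖ ≤ ‖x - w‖ := le_trans h2 h1
      _ = dist x w := (dist_eq_norm x w).symm
  refine ⟨key, fun g hg wstar hws => ?_⟩
  have hlip : g p - g x ≤ ‖x - p‖ := by
    have hd := hg.dist_le_mul p x
    rw [NNReal.coe_one, one_mul] at hd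
    calc g p - g x ≤ |g p - g x| := le_abs_self _
      _ ≤ dist p x := by rw [Real.dist_eq] at hd; exact hd
      _ = ‖x - p‖ := by rw [dist_comm, dist_eq_norm]
  have hnorm : ‖x - p‖ ≤ Metric.infDist x W / γ := by
    rw [le_div_iff₀ hγ0]; linarith [key]
  linarith
end

section
/- Let W be a nonempty closed convex subset of the Euclidean space ℝ^d and let K ≥ 1. Let v̂¹, …, v̂^K ∈ ℝ^d, define the running averages W⁰ = 0 and W^k = ((k−1) W^{k−1} + v̂^k)/k for k ≥ 1, and for each k let p^{k−1} ∈ W attain ‖W^{k−1} − p^{k−1}‖₂ = dist(W^{k−1}, W), with θ^k = (W^{k−1} − p^{k−1})/‖W^{k−1} − p^{k−1}‖₂ when W^{k−1} ∉ W and θ^k an arbitrary unit vector otherwise. Then K² · dist(W^K, W)² ≤ ∑_{k=1}^{K} ‖v̂^k − p^{k−1}‖₂² + 2 ∑_{k=1}^{K} (k−1) · dist(W^{k−1}, W) · ⟪θ^k, v̂^k − p^{k−1}⟫. -/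
private lemma tele_aux (g : ℕ → ℝ) (K : ℕ) :
    ∑ k ∈ Finset.Icc 1 K, (g k - g (k - 1)) = g K - g 0 := by
  induction K with
  | zero => simp
  | succ n ih =>
      rw [Finset.sum_Icc_succ_top (by omega), ih]
      simp

/-- Telescoped Blackwell recursion for the projection-based dual update (PDU):
with running averages `W^k = ((k−1) W^{k−1} + v̂^k)/k`, projections `p^{k−1}`
of `W^{k−1}` onto the closed convex set `W`, and dual directions `θ^k` (the
normalized direction toward the projection when `W^{k−1} ∉ W`, an arbitrary
unit vector otherwise),
`K² dist(W^K, W)² ≤ ∑_k ‖v̂^k − p^{k−1}‖² + 2 ∑_k (k−1) dist(W^{k−1}, W) ⟪θ^k, v̂^k − p^{k−1}⟫`. -/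
theorem stmt_17 {d : ℕ} (W : Set (EuclideanSpace ℝ (Fin d)))
    (hne : W.Nonempty) (hcl : IsClosed W) (hconv : Convex ℝ W)
    (K : ℕ) (hK : 1 ≤ K)
    (v : ℕ → EuclideanSpace ℝ (Fin d))
    (Wavg : ℕ → EuclideanSpace ℝ (Fin d))
    (hW0 : Wavg 0 = 0)
    (hWavg : ∀ k ∈ Finset.Icc 1 K,
      Wavg k = (k : ℝ)⁻¹ • (((k : ℝ) - 1) • Wavg (k - 1) + v k))
    (p : ℕ → EuclideanSpace ℝ (Fin d))
    (hpW : ∀ k ∈ Finset.Icc 1 K, p (k - 1) ∈ W)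
    (hproj : ∀ k ∈ Finset.Icc 1 K,
      ‖Wavg (k - 1) - p (k - 1)‖ = Metric.infDist (Wavg (k - 1)) W)
    (θ : ℕ → EuclideanSpace ℝ (Fin d))
    (hθ : ∀ k ∈ Finset.Icc 1 K,
      (Wavg (k - 1) ∉ W →
        θ k = ‖Wavg (k - 1) - p (k - 1)‖⁻¹ • (Wavg (k - 1) - p (k - 1))) ∧
      (Wavg (k - 1) ∈ W → ‖θ k‖ = 1)) :
    (K : ℝ) ^ 2 * Metric.infDist (Wavg K) W ^ 2
      ≤ ∑ k ∈ Finset.Icc 1 K, ‖v k - p (k - 1)‖ ^ 2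
        + 2 * ∑ k ∈ Finset.Icc 1 K, ((k : ℝ) - 1)
            * Metric.infDist (Wavg (k - 1)) W
            * (inner ℝ (θ k) (v k - p (k - 1)) : ℝ) := by
  set D : ℕ → ℝ := fun k => Metric.infDist (Wavg k) W with hD
  set g : ℕ → ℝ := fun k => (k : ℝ) ^ 2 * D k ^ 2 with hg
  have key : ∀ k ∈ Finset.Icc 1 K,
      g k - g (k - 1)
        ≤ ‖v k - p (k - 1)‖ ^ 2
          + 2 * (((k : ℝ) - 1) * D (k - 1) * (inner ℝ (θ k) (v k - p (k - 1)) : ℝ)) := by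
    intro k hk
    obtain ⟨hk1, hkK⟩ := Finset.mem_Icc.mp hk
    have hkR : (1 : ℝ) ≤ (k : ℝ) := by exact_mod_cast hk1
    have hk0 : (k : ℝ) ≠ 0 := by linarith
    have hcast : ((k - 1 : ℕ) : ℝ) = (k : ℝ) - 1 := by
      push_cast [hk1]; ring
    have hstep : (k : ℝ) • Wavg k = ((k : ℝ) - 1) • Wavg (k - 1) + v k := by
      rw [hWavg k hk, smul_inv_smul₀ hk0]
    set a := Wavg (k - 1) - p (k - 1) with ha
    set b := v k - p (k - 1) with hb
    have hnorma : ‖a‖ = D (k - 1) := hproj k hk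
    have hsplit : (k : ℝ) • (Wavg k - p (k - 1)) = ((k : ℝ) - 1) • a + b := by
      rw [smul_sub, hstep, ha, hb, smul_sub]
      module
    -- D k ≤ ‖Wavg k - p (k-1)‖
    have hdle : D k ≤ ‖Wavg k - p (k - 1)‖ := by
      have := Metric.infDist_le_dist_of_mem (hpW k hk) (x := Wavg k)
      rwa [dist_eq_norm] at this
    have hDnn : 0 ≤ D k := Metric.infDist_nonneg
    have hDnn' : 0 ≤ D (k - 1) := Metric.infDist_nonneg
    have h1 : (k : ℝ) ^ 2 * D k ^ 2 ≤ ‖((k : ℝ) - 1) • a + b‖ ^ 2 := by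
      rw [← hsplit, norm_smul, Real.norm_eq_abs, abs_of_pos (by linarith), mul_pow]
      have : D k ^ 2 ≤ ‖Wavg k - p (k - 1)‖ ^ 2 := by
        exact pow_le_pow_left₀ hDnn hdle 2
      nlinarith
    have hexp : ‖((k : ℝ) - 1) • a + b‖ ^ 2
        = ((k : ℝ) - 1) ^ 2 * ‖a‖ ^ 2 + 2 * (((k : ℝ) - 1) * (inner ℝ a b : ℝ)) + ‖b‖ ^ 2 := by
      rw [norm_add_sq_real, norm_smul, Real.norm_eq_abs, real_inner_smul_left, mul_pow, sq_abs]
    have hip : (inner ℝ a b : ℝ) = D (k - 1) * (inner ℝ (θ k) b : ℝ) := by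
      by_cases hmem : Wavg (k - 1) ∈ W
      · have hz : D (k - 1) = 0 := Metric.infDist_zero_of_mem hmem
        have : ‖a‖ = 0 := by rw [hnorma, hz]
        have ha0 : a = 0 := norm_eq_zero.mp this
        rw [ha0, hz, inner_zero_left, zero_mul]
      · have hθk := (hθ k hk).1 hmem
        have hane : a ≠ 0 := by
          intro h0
          apply hmem
          have : Wavg (k - 1) = p (k - 1) := by
            have := sub_eq_zero.mp h0
            exact this
          rw [this]; exact hpW k hk
        have hnne : ‖a‖ ≠ 0 := norm_ne_zero_iff.mpr hane
        rw [hθk, real_inner_smul_left, ← hnorma]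
        field_simp
        exact (mul_div_cancel_left₀ _ hnne).symm
    calc g k - g (k - 1) ≤ ‖((k : ℝ) - 1) • a + b‖ ^ 2 - g (k - 1) := by
            simp only [hg]
            linarith
      _ = ‖b‖ ^ 2 + 2 * (((k : ℝ) - 1) * D (k - 1) * (inner ℝ (θ k) b : ℝ)) := by
            rw [hexp, hip, hg]
            simp only [hcast, hnorma.symm]
            ring
  have hsum := Finset.sum_le_sum key
  have htel := tele_aux g K
  rw [htel] at hsum
  have hg0 : g 0 = 0 := by simp [hg]
  rw [hg0, sub_zero] at hsum
  have : g K = (K : ℝ) ^ 2 * Metric.infDist (Wavg K) W ^ 2 := rfl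
  rw [← this]
  calc g K ≤ ∑ k ∈ Finset.Icc 1 K, (‖v k - p (k - 1)‖ ^ 2
        + 2 * (((k : ℝ) - 1) * D (k - 1) * (inner ℝ (θ k) (v k - p (k - 1)) : ℝ))) := hsum
    _ = _ := by
        rw [Finset.sum_add_distrib, ← Finset.mul_sum]
end
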